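/- Let R be a commutative unital ring, A an associative unital R-algebra, M a left A-module, and N an R-submodule of M. Then the following statements are equivalent: (1) N is an A-submodule of M; (2) σ_l(N) = M; (3) τ_l(N) = M, where σ_l(N) := {u ∈ M | (N : u) is a left ideal of A} and τ_l(N) := {u ∈ M | (N : u) is a left Mathieu subspace of A}. -/

import Mathlib

/-- `J` is a left Mathieu subspace of the `R`-algebra `A`. -/
def IsLeftMathieuSubspace {R A : Type*} [CommRing R] [Ring A] [Algebra R A]
    (J : Submodule R A) : Prop :=
  ∀ a : A, (∀ m : ℕ, 1 ≤ m → a ^ m ∈ J) →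
    ∀ b : A, ∃ N : ℕ, 1 ≤ N ∧ ∀ m : ℕ, N ≤ m → b * a ^ m ∈ J

/-- An `R`-subspace `J` of `A` is a left ideal of `A` if it absorbs
multiplication from the left. -/
def IsLeftIdealSubspace {R A : Type*} [CommRing R] [Ring A] [Algebra R A]
    (J : Submodule R A) : Prop :=
  ∀ a ∈ J, ∀ b : A, b * a ∈ J

variable {R A M : Type*} [CommRing R] [Ring A] [Algebra R A] [AddCommGroup M]
  [Module A M] [Module R M] [IsScalarTower R A M]

/-- For `u ∈ M` and an `R`-subspace `N` of `M`, the `R`-subspace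
`(N : u) = {a ∈ A | a • u ∈ N}` of `A`. -/
def colonSub (N : Submodule R M) (u : M) : Submodule R A where
  carrier := {a : A | a • u ∈ N}
  add_mem' := by
    intro a b ha hb
    simp only [Set.mem_setOf_eq, add_smul] at *
    exact N.add_mem ha hb
  zero_mem' := by
    simp only [Set.mem_setOf_eq, zero_smul]
    exact N.zero_mem
  smul_mem' := by
    intro r a ha
    simp only [Set.mem_setOf_eq] at *
    rw [smul_assoc]
    exact N.smul_mem r ha

/-- The set of left stable elements of `N`. -/
def sigmaLeftSet (N : Submodule R M) : Set M :=
  {u : M | IsLeftIdealSubspace (colonSub (A := A) N u)}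

/-- The set of left quasi-stable elements of `N`. -/
def tauLeftSet (N : Submodule R M) : Set M :=
  {u : M | IsLeftMathieuSubspace (colonSub (A := A) N u)}

theorem stmt11 (N : Submodule R M) :
    ((∀ (a : A), ∀ x ∈ N, a • x ∈ N) ↔ sigmaLeftSet (A := A) N = Set.univ) ∧
    ((∀ (a : A), ∀ x ∈ N, a • x ∈ N) ↔ tauLeftSet (A := A) N = Set.univ) := by
  have key : ∀ u : M, (a : A) → a • u ∈ N → ∀ b : A, (b * a) • u ∈ N → True := fun _ _ _ _ _ => trivial
  constructor
  · constructor
    · intro h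
      ext u
      simp only [Set.mem_univ, iff_true, sigmaLeftSet, Set.mem_setOf_eq]
      intro a ha b
      show (b * a) • u ∈ N
      rw [mul_smul]
      exact h b _ ha
    · intro h a x hx
      have hu : x ∈ sigmaLeftSet (A := A) N := h ▸ Set.mem_univ x
      have h1 : (1 : A) ∈ colonSub (A := A) N x := by
        show (1 : A) • x ∈ N; rw [one_smul]; exact hx
      have := hu 1 h1 a
      simpa using (show (a * 1) • x ∈ N from this)
  · constructor
    · intro h
      ext u
      simp only [Set.mem_univ, iff_true, tauLeftSet, Set.mem_setOf_eq]
      intro a ha b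
      exact ⟨1, le_refl 1, fun m hm => by
        show (b * a ^ m) • u ∈ N
        rw [mul_smul]
        exact h b _ (ha m hm)⟩
    · intro h a x hx
      have hu : x ∈ tauLeftSet (A := A) N := h ▸ Set.mem_univ x
      obtain ⟨n, hn1, hn⟩ := hu 1 (fun m _ => by
        show ((1:A) ^ m) • x ∈ N; rw [one_pow, one_smul]; exact hx) a
      have := hn n le_rfl
      simpa using (show (a * (1:A) ^ n) • x ∈ N from this)
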